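/- arXiv:2502.19487 — 2 statements merged into one kernel-verified Lean document; each statement's English description precedes it below -/
import Mathlib

section
/- With I^{FB}_{ij}(φ) = Σ_{k,ℓ<d} (2/(λ_k + λ_ℓ)) ⟨k| D_i |ℓ⟩ ⟨ℓ| D_j |k⟩ (where D_i = ∂_i ρ(φ)), the following intermediate identity holds for all i, j ∈ {1,…,J}: I^{FB}_{ij}(φ) = 2 · Tr[{A_i, A_j} ρ] − 8 · Σ_{k,ℓ<d} (λ_k λ_ℓ/(λ_k + λ_ℓ)) ⟨k̃| A_i |ℓ̃⟩ ⟨ℓ̃| A_j |k̃⟩, where {X,Y} = XY + YX and A_j = U_{R_j}† H_j U_{R_j}. -/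
open Matrix

noncomputable section

attribute [local instance] Matrix.linftyOpNormedAddCommGroup Matrix.linftyOpNormedSpace

/-- Square complex matrices of size `d`. -/
abbrev Mat (d : ℕ) := Matrix (Fin d) (Fin d) ℂ

/-- Descending product `f (a + n - 1) * ⋯ * f (a + 1) * f a` (empty product is `1`). -/
def descProd {d : ℕ} (f : ℕ → Mat d) (a : ℕ) : ℕ → Mat d
  | 0 => 1
  | n + 1 => f (a + n) * descProd f a n

/-- The `j`-th layer `U_j(φ_j) = exp (−i φ_j H_j) V_j`. -/
def layer {d : ℕ} (H V : ℕ → Mat d) (φ : ℕ → ℝ) (j : ℕ) : Mat d :=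
  NormedSpace.exp ((-(Complex.I * (φ j : ℂ))) • H j) * V j

/-- `U_{R_j} = U_j ⋯ U_1`. -/
def UR {d : ℕ} (H V : ℕ → Mat d) (φ : ℕ → ℝ) (j : ℕ) : Mat d :=
  descProd (layer H V φ) 1 j

/-- `U_{L_j} = U_J ⋯ U_j`. -/
def UL {d : ℕ} (H V : ℕ → Mat d) (φ : ℕ → ℝ) (J j : ℕ) : Mat d :=
  descProd (layer H V φ) j (J + 1 - j)

/-- The full layered circuit `U(φ) = U_J ⋯ U_1`. -/
def Ufull {d : ℕ} (H V : ℕ → Mat d) (φ : ℕ → ℝ) (J : ℕ) : Mat d :=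
  UR H V φ J

/-- `B_j = U_{L_{j+1}} H_j U_{L_{j+1}}†`. -/
def Bmat {d : ℕ} (H V : ℕ → Mat d) (φ : ℕ → ℝ) (J j : ℕ) : Mat d :=
  UL H V φ J (j + 1) * H j * (UL H V φ J (j + 1))ᴴ

/-- `A_j = U_{R_j}† H_j U_{R_j}`. -/
def Amat {d : ℕ} (H V : ℕ → Mat d) (φ : ℕ → ℝ) (j : ℕ) : Mat d :=
  (UR H V φ j)ᴴ * H j * UR H V φ j

/-- The thermal state `ρ = e^{−G}/Z`. -/
def thermal {d : ℕ} (G : Mat d) (Z : ℝ) : Mat d :=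
  (Z : ℂ)⁻¹ • NormedSpace.exp (-G)

/-- The parameterized state `ρ(φ) = U(φ) ρ U(φ)†`. -/
def rhoFun {d : ℕ} (H V : ℕ → Mat d) (J : ℕ) (G : Mat d) (Z : ℝ) (φ : ℕ → ℝ) : Mat d :=
  Ufull H V φ J * thermal G Z * (Ufull H V φ J)ᴴ

/-- The sesquilinear form `⟨u| M |v⟩`, conjugate-linear in `u`. -/
def braket {d : ℕ} (u : Fin d → ℂ) (M : Mat d) (v : Fin d → ℂ) : ℂ :=
  star u ⬝ᵥ M.mulVec v


lemma alg_key {d : ℕ} (C L C₂ T K R : Mat d) (hR : L * C₂ = R) (h1 : R * Rᴴ = 1) :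
    C * ((-Complex.I • K) * L) * C₂ * T * (C₂ᴴ * Lᴴ * Cᴴ) +
      C * L * C₂ * T * (C₂ᴴ * (Lᴴ * (Complex.I • K)) * Cᴴ) =
    C * R * (-Complex.I • (Rᴴ * K * R * T - T * (Rᴴ * K * R))) * (Rᴴ * Cᴴ) := by
  have h2 : C₂ᴴ * Lᴴ = Rᴴ := by rw [← Matrix.conjTranspose_mul, hR]
  have hR' : ∀ X : Mat d, L * (C₂ * X) = R * X := fun X => by rw [← mul_assoc, hR]
  have h2' : ∀ X : Mat d, C₂ᴴ * (Lᴴ * X) = Rᴴ * X := fun X => by rw [← mul_assoc, h2]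
  have hcanc : ∀ X : Mat d, R * (Rᴴ * X) = X := fun X => by rw [← mul_assoc, h1, one_mul]
  simp only [smul_sub, mul_sub, sub_mul, mul_smul_comm, smul_mul_assoc, mul_assoc,
    hR', h2', hcanc, h2]
  rw [sub_eq_add_neg, ← neg_smul, neg_neg]
attribute [local instance] Matrix.linftyOpNormedRing Matrix.linftyOpNormedAlgebra

lemma descProd_add {d : ℕ} (f : ℕ → Mat d) (a m n : ℕ) :
    descProd f a (m + n) = descProd f (a + m) n * descProd f a m := by
  induction n with
  | zero => simp [descProd]
  | succ n ih =>
      show descProd f a ((m + n) + 1) = _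
      rw [descProd, ih, descProd, ← mul_assoc, add_assoc]

lemma descProd_congr {d : ℕ} {f g : ℕ → Mat d} {a n : ℕ}
    (h : ∀ k, a ≤ k → k < a + n → f k = g k) : descProd f a n = descProd g a n := by
  induction n with
  | zero => rfl
  | succ n ih =>
      rw [descProd, descProd, h (a + n) (Nat.le_add_right _ _) (by omega),
        ih fun k hk hk' => h k hk (by omega)]

lemma exp_skew_mem_unitary {d : ℕ} (A : Mat d) (hA : Aᴴ = -A) :
    NormedSpace.exp A ∈ Matrix.unitaryGroup (Fin d) ℂ := by
  rw [Matrix.mem_unitaryGroup_iff', Matrix.star_eq_conjTranspose]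
  have h1 : (NormedSpace.exp A)ᴴ = NormedSpace.exp (-A) := by
    rw [← Matrix.exp_conjTranspose, hA]
  have h2 : NormedSpace.exp (-A) * NormedSpace.exp A = 1 := by
    have h3 := (Matrix.exp_add_of_commute (-A) A ((Commute.refl A).neg_left)).symm
    rw [neg_add_cancel, NormedSpace.exp_zero] at h3
    exact h3
  exact h1 ▸ h2

lemma layer_mem_unitary {d : ℕ} (H V : ℕ → Mat d) (hH : ∀ j, (H j).IsHermitian)
    (hV : ∀ j, V j ∈ Matrix.unitaryGroup (Fin d) ℂ) (φ : ℕ → ℝ) (j : ℕ) :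
    layer H V φ j ∈ Matrix.unitaryGroup (Fin d) ℂ := by
  refine mul_mem (exp_skew_mem_unitary _ ?_) (hV j)
  rw [Matrix.conjTranspose_smul, (hH j).eq, ← neg_smul]
  congr 1
  simp [Complex.ext_iff]

lemma descProd_mem_unitary {d : ℕ} {f : ℕ → Mat d}
    (hf : ∀ j, f j ∈ Matrix.unitaryGroup (Fin d) ℂ) (a n : ℕ) :
    descProd f a n ∈ Matrix.unitaryGroup (Fin d) ℂ := by
  induction n with
  | zero => exact one_mem _
  | succ n ih => exact mul_mem (hf _) ih
lemma UR_mem_unitary {d : ℕ} {H V : ℕ → Mat d} (hH : ∀ j, (H j).IsHermitian)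
    (hV : ∀ j, V j ∈ Matrix.unitaryGroup (Fin d) ℂ) (φ : ℕ → ℝ) (n : ℕ) :
    UR H V φ n ∈ Matrix.unitaryGroup (Fin d) ℂ :=
  descProd_mem_unitary (layer_mem_unitary H V hH hV φ) _ _

lemma UR_succ' {d : ℕ} (H V : ℕ → Mat d) (φ : ℕ → ℝ) {i : ℕ} (hi : 1 ≤ i) :
    UR H V φ i = layer H V φ i * UR H V φ (i - 1) := by
  unfold UR
  obtain ⟨n, rfl⟩ : ∃ n, i = n + 1 := ⟨i - 1, by omega⟩
  rw [descProd, Nat.add_comm 1 n]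
  norm_num

lemma Ufull_split {d : ℕ} (H V : ℕ → Mat d) (φ : ℕ → ℝ) {J i : ℕ} (hi1 : 1 ≤ i) (hiJ : i ≤ J) :
    Ufull H V φ J = UL H V φ J (i + 1) * layer H V φ i * UR H V φ (i - 1) := by
  unfold Ufull UR UL
  have h1 : J = (i - 1) + ((J - i) + 1) := by omega
  have h2 : J + 1 - (i + 1) = J - i := by omega
  rw [h2]
  calc descProd (layer H V φ) 1 J
      = descProd (layer H V φ) 1 ((i - 1) + ((J - i) + 1)) := by rw [← h1]
    _ = descProd (layer H V φ) (1 + (i - 1)) ((J - i) + 1) * descProd (layer H V φ) 1 (i - 1) :=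
        descProd_add _ _ _ _
    _ = descProd (layer H V φ) i ((J - i) + 1) * descProd (layer H V φ) 1 (i - 1) := by
        rw [show 1 + (i - 1) = i from by omega]
    _ = (descProd (layer H V φ) (i + 1) (J - i) * descProd (layer H V φ) i 1) *
          descProd (layer H V φ) 1 (i - 1) := by
        rw [show (J - i) + 1 = 1 + (J - i) from by omega, descProd_add]
    _ = _ := by rw [descProd, descProd, mul_one, add_zero, mul_assoc, ← mul_assoc _ _ (descProd _ 1 (i-1)), mul_assoc]

lemma UL_update {d : ℕ} (H V : ℕ → Mat d) (φ : ℕ → ℝ) (J i : ℕ) (x : ℝ) :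
    UL H V (Function.update φ i x) J (i + 1) = UL H V φ J (i + 1) := by
  unfold UL
  refine descProd_congr fun k hk _ => ?_
  unfold layer
  rw [Function.update_of_ne (by omega)]

lemma UR_update {d : ℕ} (H V : ℕ → Mat d) (φ : ℕ → ℝ) (i : ℕ) (x : ℝ) :
    UR H V (Function.update φ i x) (i - 1) = UR H V φ (i - 1) := by
  unfold UR
  refine descProd_congr fun k hk hk' => ?_
  unfold layer
  rw [Function.update_of_ne (by omega)]
attribute [local instance] Matrix.linftyOpNormedRing Matrix.linftyOpNormedAlgebra

lemma hasDerivAt_expMat {d : ℕ} (A : Mat d) (t : ℝ) :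
    HasDerivAt (fun x : ℝ => NormedSpace.exp (x • A)) (NormedSpace.exp (t • A) * A) t := by
  have h := hasDerivAt_exp_smul_const (𝕂 := ℝ) A t
  exact h

lemma hasDerivAt_expMat' {d : ℕ} (A : Mat d) (t : ℝ) :
    HasDerivAt (fun x : ℝ => NormedSpace.exp (x • A)) (A * NormedSpace.exp (t • A)) t := by
  have h := hasDerivAt_exp_smul_const' (𝕂 := ℝ) A t
  exact h
lemma smul_coe_mul {d : ℕ} (x : ℝ) (M : Mat d) :
    (-(Complex.I * (x : ℂ))) • M = x • ((-Complex.I) • M) := by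
  rw [← smul_assoc]
  congr 1
  rw [Complex.real_smul]
  ring

lemma expH {d : ℕ} {A B : Mat d} (hAB : Aᴴ = B) (t : ℝ) :
    (NormedSpace.exp (t • A))ᴴ = NormedSpace.exp (t • B) := by
  rw [← Matrix.exp_conjTranspose, Matrix.conjTranspose_smul, star_trivial, hAB]

set_option maxHeartbeats 1000000 in
lemma deriv_formula {d J : ℕ} {H V : ℕ → Mat d} (hH : ∀ j, (H j).IsHermitian)
    (hV : ∀ j, V j ∈ Matrix.unitaryGroup (Fin d) ℂ) (G : Mat d) (Z : ℝ) (φ : ℕ → ℝ)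
    {i : ℕ} (hi1 : 1 ≤ i) (hiJ : i ≤ J) {Dc : Mat d}
    (h : HasDerivAt (fun x : ℝ => rhoFun H V J G Z (Function.update φ i x)) Dc (φ i)) :
    Dc = Ufull H V φ J *
        ((-Complex.I) • (Amat H V φ i * thermal G Z - thermal G Z * Amat H V φ i)) *
        (Ufull H V φ J)ᴴ := by
  set C₁ := UL H V φ J (i + 1) with hC₁
  set C₂ := UR H V φ (i - 1) with hC₂
  set T := thermal G Z with hT
  set A' : Mat d := (-Complex.I) • H i with hA'
  set A'' : Mat d := Complex.I • H i with hA''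
  set t : ℝ := φ i with ht
  have hA'H : A'ᴴ = A'' := by
    rw [hA', Matrix.conjTranspose_smul, (hH i).eq, hA'']
    congr 1
    simp
  have hlay : ∀ x : ℝ, layer H V (Function.update φ i x) i =
      NormedSpace.exp (x • A') * V i := by
    intro x
    unfold layer
    rw [Function.update_self, smul_coe_mul]
  have hlayt : layer H V φ i = NormedSpace.exp (t • A') * V i := by
    unfold layer
    rw [smul_coe_mul]
  have hfun : ∀ x : ℝ, rhoFun H V J G Z (Function.update φ i x) =
      C₁ * (NormedSpace.exp (x • A') * V i) * C₂ * T *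
        (C₂ᴴ * ((V i)ᴴ * NormedSpace.exp (x • A'')) * C₁ᴴ) := by
    intro x
    have hs : Ufull H V (Function.update φ i x) J =
        C₁ * (NormedSpace.exp (x • A') * V i) * C₂ := by
      rw [Ufull_split H V _ hi1 hiJ, UL_update, UR_update, hlay x]
    have hsH : (Ufull H V (Function.update φ i x) J)ᴴ =
        C₂ᴴ * ((V i)ᴴ * NormedSpace.exp (x • A'')) * C₁ᴴ := by
      rw [hs, Matrix.conjTranspose_mul, Matrix.conjTranspose_mul, Matrix.conjTranspose_mul,
        expH hA'H, ← mul_assoc]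
    rw [rhoFun, hsH, hs, ← hT]
  have hL : HasDerivAt (fun x : ℝ => C₁ * (NormedSpace.exp (x • A') * V i) * C₂)
      (C₁ * (A' * NormedSpace.exp (t • A') * V i) * C₂) t :=
    (((hasDerivAt_expMat' A' t).mul_const (V i)).const_mul C₁).mul_const C₂
  have hR : HasDerivAt (fun x : ℝ => C₂ᴴ * ((V i)ᴴ * NormedSpace.exp (x • A'')) * C₁ᴴ)
      (C₂ᴴ * ((V i)ᴴ * (NormedSpace.exp (t • A'') * A'')) * C₁ᴴ) t :=
    (((hasDerivAt_expMat A'' t).const_mul ((V i)ᴴ)).const_mul (C₂ᴴ)).mul_const (C₁ᴴ)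
  have hF := (hL.mul_const T).mul hR
  have hDc : Dc =
      C₁ * (A' * NormedSpace.exp (t • A') * V i) * C₂ * T *
          (C₂ᴴ * ((V i)ᴴ * NormedSpace.exp (t • A'')) * C₁ᴴ) +
        C₁ * (NormedSpace.exp (t • A') * V i) * C₂ * T *
          (C₂ᴴ * ((V i)ᴴ * (NormedSpace.exp (t • A'') * A'')) * C₁ᴴ) := by
    have hfe : (fun x : ℝ => rhoFun H V J G Z (Function.update φ i x)) =
        fun x : ℝ => C₁ * (NormedSpace.exp (x • A') * V i) * C₂ * T *
          (C₂ᴴ * ((V i)ᴴ * NormedSpace.exp (x • A'')) * C₁ᴴ) := funext hfun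
    rw [hfe] at h
    exact h.unique hF
  -- now algebraic identification
  set R := UR H V φ i with hRdef
  have hRR : layer H V φ i * C₂ = R := (UR_succ' H V φ hi1).symm
  have hU : Ufull H V φ J = C₁ * R := by
    rw [Ufull_split H V φ hi1 hiJ, mul_assoc, hRR]
  have hR1 : R * Rᴴ = 1 := by
    have := Matrix.mem_unitaryGroup_iff.mp (UR_mem_unitary hH hV φ i)
    rwa [Matrix.star_eq_conjTranspose] at this
  have hcanc : ∀ X : Mat d, R * (Rᴴ * X) = X := fun X => by
    rw [← mul_assoc, hR1, one_mul]
  have hexpH' : (V i)ᴴ * NormedSpace.exp (t • A'') = (layer H V φ i)ᴴ := by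
    rw [hlayt, Matrix.conjTranspose_mul, expH hA'H]
  have hAmat : Amat H V φ i = Rᴴ * H i * R := rfl
  rw [hDc, hU, hAmat]
  have hUH : (C₁ * R)ᴴ = Rᴴ * C₁ᴴ := Matrix.conjTranspose_mul _ _
  rw [hUH]
  -- replace exp-layer pieces
  have e1 : A' * NormedSpace.exp (t • A') * V i = A' * layer H V φ i := by
    rw [hlayt, mul_assoc]
  have e2 : NormedSpace.exp (t • A') * V i = layer H V φ i := hlayt.symm
  rw [e1, e2, hexpH']
  -- now everything in C₁, layer, C₂, R, T, H i
  have hA2 : (V i)ᴴ * (NormedSpace.exp (t • A'') * A'') = (layer H V φ i)ᴴ * A'' := by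
    rw [← mul_assoc, hexpH']
  rw [hA2, hA', hA'']
  exact alg_key C₁ (layer H V φ i) C₂ T (H i) R hRR hR1
section Braket

variable {d : ℕ}

lemma braket_smul (u : Fin d → ℂ) (c : ℂ) (M : Mat d) (w : Fin d → ℂ) :
    braket u (c • M) w = c * braket u M w := by
  unfold braket
  rw [Matrix.smul_mulVec, dotProduct_smul, smul_eq_mul]

lemma braket_sub (u : Fin d → ℂ) (M N : Mat d) (w : Fin d → ℂ) :
    braket u (M - N) w = braket u M w - braket u N w := by
  unfold braket
  rw [Matrix.sub_mulVec, dotProduct_sub]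

lemma braket_add (u : Fin d → ℂ) (M N : Mat d) (w : Fin d → ℂ) :
    braket u (M + N) w = braket u M w + braket u N w := by
  unfold braket
  rw [Matrix.add_mulVec, dotProduct_add]

lemma braket_conj (U M : Mat d) (a b : Fin d → ℂ) :
    braket (U.mulVec a) M (U.mulVec b) = braket a (Uᴴ * M * U) b := by
  unfold braket
  rw [Matrix.star_mulVec, Matrix.mulVec_mulVec, ← Matrix.dotProduct_mulVec,
    Matrix.mulVec_mulVec, ← mul_assoc]

variable {v : Fin d → Fin d → ℂ}
  (hortho : ∀ k l, star (v k) ⬝ᵥ v l = if k = l then 1 else 0)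

include hortho in
lemma comp_sum : ∀ a b : Fin d, (∑ l, v l a * star (v l b)) = if a = b then 1 else 0 := by
  intro a b
  set P : Mat d := Matrix.of (fun a l => v l a) with hP
  have h1 : Pᴴ * P = 1 := by
    ext k l
    simp only [Matrix.mul_apply, Matrix.conjTranspose_apply, Matrix.one_apply, hP,
      Matrix.of_apply]
    simpa [dotProduct] using hortho k l
  have h2 : P * Pᴴ = 1 := mul_eq_one_comm.mp h1
  have := congrFun (congrFun h2 a) b
  simp only [Matrix.mul_apply, Matrix.conjTranspose_apply, Matrix.one_apply, hP,
    Matrix.of_apply] at this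
  simpa using this

include hortho in
lemma complete_sum (M N : Mat d) (u w : Fin d → ℂ) :
    ∑ l, braket u M (v l) * braket (v l) N w = braket u (M * N) w := by
  have key := comp_sum hortho
  unfold braket
  calc ∑ l, (star u ⬝ᵥ M.mulVec (v l)) * (star (v l) ⬝ᵥ N.mulVec w)
      = ∑ l, ∑ a, ∑ b, (Matrix.vecMul (star u) M a * (N.mulVec w) b) *
          (v l a * star (v l b)) := by
        refine Finset.sum_congr rfl fun l _ => ?_
        rw [Matrix.dotProduct_mulVec]
        rw [dotProduct, dotProduct, Finset.sum_mul_sum]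
        refine Finset.sum_congr rfl fun a _ => Finset.sum_congr rfl fun b _ => ?_
        simp only [Pi.star_apply]
        ring
    _ = ∑ a, ∑ b, (Matrix.vecMul (star u) M a * (N.mulVec w) b) *
          (∑ l, v l a * star (v l b)) := by
        rw [Finset.sum_comm]
        refine Finset.sum_congr rfl fun a _ => ?_
        rw [Finset.sum_comm]
        refine Finset.sum_congr rfl fun b _ => ?_
        rw [Finset.mul_sum]
    _ = ∑ a, Matrix.vecMul (star u) M a * (N.mulVec w) a := by
        refine Finset.sum_congr rfl fun a _ => ?_
        simp only [key]
        simp [Finset.sum_ite_eq', mul_ite]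
    _ = star u ⬝ᵥ (M * N).mulVec w := by
        rw [← Matrix.mulVec_mulVec, Matrix.dotProduct_mulVec, dotProduct]

include hortho in
lemma trace_eq_sum (M : Mat d) : M.trace = ∑ k, braket (v k) M (v k) := by
  have key := comp_sum hortho
  unfold braket
  symm
  calc ∑ k, star (v k) ⬝ᵥ M.mulVec (v k)
      = ∑ k, ∑ a, ∑ b, star (v k a) * (M a b * v k b) := by
        refine Finset.sum_congr rfl fun k _ => ?_
        simp only [dotProduct, Matrix.mulVec, dotProduct, Pi.star_apply, Finset.mul_sum]
    _ = ∑ a, ∑ b, M a b * ∑ k, v k b * star (v k a) := by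
        rw [Finset.sum_comm]
        refine Finset.sum_congr rfl fun a _ => ?_
        rw [Finset.sum_comm]
        refine Finset.sum_congr rfl fun b _ => ?_
        rw [Finset.mul_sum]
        refine Finset.sum_congr rfl fun k _ => ?_
        ring
    _ = ∑ a, M a a := by
        refine Finset.sum_congr rfl fun a _ => ?_
        simp only [key]
        simp [Finset.sum_ite_eq', mul_ite]
    _ = M.trace := rfl

end Braket
lemma thermal_herm {d : ℕ} {G : Mat d} (hG : G.IsHermitian) (Z : ℝ) :
    (thermal G Z)ᴴ = thermal G Z := by
  unfold thermal
  rw [Matrix.conjTranspose_smul]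
  congr 1
  · simp [Complex.ext_iff]
  · exact Matrix.IsHermitian.exp hG.neg

lemma eigL {d : ℕ} {G : Mat d} {Z : ℝ} (hTh : (thermal G Z)ᴴ = thermal G Z)
    {u : Fin d → ℂ} {lam : ℝ} (hv : (thermal G Z).mulVec u = (lam : ℂ) • u)
    (M : Mat d) (w : Fin d → ℂ) :
    braket u (thermal G Z * M) w = (lam : ℂ) * braket u M w := by
  unfold braket
  rw [← Matrix.mulVec_mulVec, Matrix.dotProduct_mulVec]
  have h : star u ᵥ* thermal G Z = (lam : ℂ) • star u := by
    have h2 := congrArg star hv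
    rw [Matrix.star_mulVec, hTh, star_smul] at h2
    rw [h2]
    congr 1
    simp
  rw [h, smul_dotProduct, smul_eq_mul]

lemma eigR {d : ℕ} {G : Mat d} {Z : ℝ}
    {u : Fin d → ℂ} {lam : ℝ} (hv : (thermal G Z).mulVec u = (lam : ℂ) • u)
    (M : Mat d) (w : Fin d → ℂ) :
    braket w (M * thermal G Z) u = (lam : ℂ) * braket w M u := by
  unfold braket
  rw [← Matrix.mulVec_mulVec, hv, Matrix.mulVec_smul, dotProduct_smul, smul_eq_mul]
/-- Intermediate identity for the Fisher–Bures information matrix elements: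
`I^{FB}_{ij}(φ) = 2 Tr[{A_i,A_j} ρ] − 8 Σ_{k,ℓ} (λ_k λ_ℓ/(λ_k+λ_ℓ)) ⟨k̃|A_i|ℓ̃⟩⟨ℓ̃|A_j|k̃⟩`. -/
theorem fisher_bures_intermediate_pqc {d J : ℕ} (hd : 1 ≤ d)
    (H V G : _) (hH : ∀ j, (H j : Mat d).IsHermitian)
    (hV : ∀ j, V j ∈ Matrix.unitaryGroup (Fin d) ℂ)
    (hG : (G : Mat d).IsHermitian)
    (Z : ℝ) (hZpos : 0 < Z) (hZ : (NormedSpace.exp (-G)).trace = (Z : ℂ))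
    (v : Fin d → Fin d → ℂ)
    (hortho : ∀ k l, star (v k) ⬝ᵥ v l = if k = l then 1 else 0)
    (lam : Fin d → ℝ) (hlampos : ∀ k, 0 < lam k)
    (hrhov : ∀ k, (thermal G Z).mulVec (v k) = (lam k : ℂ) • v k)
    (φ : ℕ → ℝ) (i j : ℕ) (hi1 : 1 ≤ i) (hiJ : i ≤ J) (hj1 : 1 ≤ j) (hjJ : j ≤ J)
    (Di Dj : Mat d)
    (hDi : HasDerivAt (fun x : ℝ => rhoFun H V J G Z (Function.update φ i x)) Di (φ i))
    (hDj : HasDerivAt (fun x : ℝ => rhoFun H V J G Z (Function.update φ j x)) Dj (φ j)) :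
    ∑ k : Fin d, ∑ l : Fin d,
        ((2 / (lam k + lam l) : ℝ) : ℂ) *
          braket ((Ufull H V φ J).mulVec (v k)) Di ((Ufull H V φ J).mulVec (v l)) *
          braket ((Ufull H V φ J).mulVec (v l)) Dj ((Ufull H V φ J).mulVec (v k)) =
      2 * ((Amat H V φ i * Amat H V φ j + Amat H V φ j * Amat H V φ i) *
          thermal G Z).trace -
        8 * ∑ k : Fin d, ∑ l : Fin d,
          ((lam k * lam l / (lam k + lam l) : ℝ) : ℂ) *
            braket (v k) (Amat H V φ i) (v l) * braket (v l) (Amat H V φ j) (v k) := by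
  classical
  have hTh : (thermal G Z)ᴴ = thermal G Z := thermal_herm hG Z
  have hUmem : Ufull H V φ J ∈ Matrix.unitaryGroup (Fin d) ℂ := UR_mem_unitary hH hV φ J
  have hU1 : (Ufull H V φ J)ᴴ * Ufull H V φ J = 1 := by
    have := Matrix.mem_unitaryGroup_iff'.mp hUmem
    rwa [Matrix.star_eq_conjTranspose] at this
  have hDi' := deriv_formula hH hV G Z φ hi1 hiJ hDi
  have hDj' := deriv_formula hH hV G Z φ hj1 hjJ hDj
  have hmid : ∀ (X : Mat d) (a b : Fin d → ℂ),
      braket ((Ufull H V φ J).mulVec a) (Ufull H V φ J * X * (Ufull H V φ J)ᴴ)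
        ((Ufull H V φ J).mulVec b) = braket a X b := by
    intro X a b
    rw [braket_conj]
    congr 1
    simp only [mul_assoc]
    rw [hU1, mul_one, ← mul_assoc, hU1, one_mul]
  have hak : ∀ k l : Fin d,
      braket ((Ufull H V φ J).mulVec (v k)) Di ((Ufull H V φ J).mulVec (v l)) =
        (-Complex.I) * (((lam l : ℂ) - (lam k : ℂ)) * braket (v k) (Amat H V φ i) (v l)) := by
    intro k l
    rw [hDi', hmid, braket_smul, braket_sub, eigR (hrhov l), eigL hTh (hrhov k)]
    ring
  have hbk : ∀ k l : Fin d,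
      braket ((Ufull H V φ J).mulVec (v l)) Dj ((Ufull H V φ J).mulVec (v k)) =
        (-Complex.I) * (((lam k : ℂ) - (lam l : ℂ)) * braket (v l) (Amat H V φ j) (v k)) := by
    intro k l
    rw [hDj', hmid, braket_smul, braket_sub, eigR (hrhov k), eigL hTh (hrhov l)]
    ring
  have htr : ((Amat H V φ i * Amat H V φ j + Amat H V φ j * Amat H V φ i) * thermal G Z).trace
      = ∑ k : Fin d, ∑ l : Fin d, (((lam k : ℂ) + (lam l : ℂ)) *
          (braket (v k) (Amat H V φ i) (v l) * braket (v l) (Amat H V φ j) (v k))) := by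
    rw [trace_eq_sum hortho]
    have step : ∀ k : Fin d,
        braket (v k) ((Amat H V φ i * Amat H V φ j + Amat H V φ j * Amat H V φ i) *
            thermal G Z) (v k)
          = (lam k : ℂ) *
              ((∑ l, braket (v k) (Amat H V φ i) (v l) * braket (v l) (Amat H V φ j) (v k)) +
                ∑ l, braket (v k) (Amat H V φ j) (v l) * braket (v l) (Amat H V φ i) (v k)) := by
      intro k
      rw [eigR (hrhov k), braket_add,
        ← complete_sum hortho (Amat H V φ i) (Amat H V φ j) (v k) (v k),
        ← complete_sum hortho (Amat H V φ j) (Amat H V φ i) (v k) (v k)]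
    simp only [step]
    have swap : ∑ k : Fin d, ∑ l : Fin d,
          (lam k : ℂ) * (braket (v k) (Amat H V φ j) (v l) * braket (v l) (Amat H V φ i) (v k))
        = ∑ k : Fin d, ∑ l : Fin d,
          (lam l : ℂ) * (braket (v k) (Amat H V φ i) (v l) * braket (v l) (Amat H V φ j) (v k)) := by
      rw [Finset.sum_comm]
      exact Finset.sum_congr rfl fun k _ => Finset.sum_congr rfl fun l _ => by ring
    calc ∑ k : Fin d, (lam k : ℂ) *
          ((∑ l, braket (v k) (Amat H V φ i) (v l) * braket (v l) (Amat H V φ j) (v k)) +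
            ∑ l, braket (v k) (Amat H V φ j) (v l) * braket (v l) (Amat H V φ i) (v k))
        = (∑ k : Fin d, ∑ l : Fin d, (lam k : ℂ) *
              (braket (v k) (Amat H V φ i) (v l) * braket (v l) (Amat H V φ j) (v k))) +
          ∑ k : Fin d, ∑ l : Fin d, (lam k : ℂ) *
              (braket (v k) (Amat H V φ j) (v l) * braket (v l) (Amat H V φ i) (v k)) := by
          rw [← Finset.sum_add_distrib]
          refine Finset.sum_congr rfl fun k _ => ?_
          rw [mul_add, Finset.mul_sum, Finset.mul_sum]
      _ = _ := by
          rw [swap, ← Finset.sum_add_distrib]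
          refine Finset.sum_congr rfl fun k _ => ?_
          rw [← Finset.sum_add_distrib]
          refine Finset.sum_congr rfl fun l _ => ?_
          ring
  simp only [hak, hbk, htr]
  rw [Finset.mul_sum, Finset.mul_sum, ← Finset.sum_sub_distrib]
  refine Finset.sum_congr rfl fun k _ => ?_
  rw [Finset.mul_sum, Finset.mul_sum, ← Finset.sum_sub_distrib]
  refine Finset.sum_congr rfl fun l _ => ?_
  have hs : (lam k : ℂ) + (lam l : ℂ) ≠ 0 := by
    have : (0:ℝ) < lam k + lam l := add_pos (hlampos k) (hlampos l)
    rw [← Complex.ofReal_add]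
    exact_mod_cast ne_of_gt this
  set A := braket (v k) (Amat H V φ i) (v l)
  set B := braket (v l) (Amat H V φ j) (v k)
  rw [mul_assoc, show (-Complex.I) * (((lam l : ℂ) - (lam k : ℂ)) * A) *
      ((-Complex.I) * (((lam k : ℂ) - (lam l : ℂ)) * B)) =
      (Complex.I * Complex.I) * ((((lam l : ℂ) - (lam k : ℂ)) *
        (((lam k : ℂ) - (lam l : ℂ)))) * (A * B)) from by ring, Complex.I_mul_I]
  push_cast
  field_simp
  ring
end
end

section
/- (The high-peak-tent density is a probability density.) Let p(t) = (2/π) ln|coth(πt/2)|. Then p(t) ≥ 0 for all t ∈ ℝ \ {0}, p is integrable on ℝ, and ∫_ℝ p(t) dt = 1. -/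
open MeasureTheory

noncomputable section

/-- The high-peak-tent density `p(t) = (2/π) ln |coth (π t / 2)|`. -/
def hptDensity (t : ℝ) : ℝ :=
  (2 / Real.pi) * Real.log |Real.cosh (Real.pi * t / 2) / Real.sinh (Real.pi * t / 2)|

open Real Set

namespace HptAux

/-- The sum of odd reciprocal squares. -/
lemma hasSum_odd_sq : HasSum (fun k : ℕ => (1:ℝ) / (2 * (k:ℝ) + 1) ^ 2) (π ^ 2 / 8) := by
  set f : ℕ → ℝ := fun n => 1 / (n:ℝ) ^ 2 with hf
  have h : HasSum f (π ^ 2 / 6) := hasSum_zeta_two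
  have heven : HasSum (fun k : ℕ => f (2 * k)) (π ^ 2 / 24) := by
    have h4 := h.mul_left (1/4)
    have : (fun k : ℕ => f (2 * k)) = fun k : ℕ => (1/4) * f k := by
      funext k; simp only [hf]; push_cast; ring
    rw [this]
    convert h4 using 1
    · rfl
    ring
  have hodds : Summable (fun k : ℕ => f (2 * k + 1)) :=
    h.summable.comp_injective (fun a b hab => by omega)
  obtain ⟨t, ht⟩ := hodds
  have huniq := (heven.even_add_odd ht).unique h
  have htv : t = π ^ 2 / 8 := by linarith
  rw [htv] at ht
  have : (fun k : ℕ => f (2 * k + 1)) = fun k : ℕ => (1:ℝ) / (2 * (k:ℝ) + 1) ^ 2 := by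
    funext k; simp only [hf]; push_cast; ring
  rwa [this] at ht

/-- The summand functions. -/
def F (k : ℕ) (u : ℝ) : ℝ :=
  (4 / π) * (1 / (2 * (k:ℝ) + 1)) * Real.exp (-((2 * (k:ℝ) + 1) * π * u))

lemma F_nonneg (k : ℕ) (u : ℝ) : 0 ≤ F k u := by
  have hπ := Real.pi_pos
  unfold F
  positivity

lemma hpt_hasSum {u : ℝ} (hu : 0 < u) : HasSum (fun k : ℕ => F k u) (hptDensity u) := by
  have hπ := Real.pi_pos
  set x : ℝ := Real.exp (-(π * u)) with hxdef
  have hx0 : 0 < x := Real.exp_pos _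
  have hx1 : x < 1 := Real.exp_lt_one_iff.mpr (by nlinarith)
  have hE1 : (1:ℝ) < Real.exp (π * u / 2) := Real.one_lt_exp_iff.mpr (by positivity)
  have hxE : x = (Real.exp (π * u / 2))⁻¹ ^ 2 := by
    rw [← Real.exp_neg, ← Real.exp_nat_mul]
    norm_num
    ring_nf
    exact hxdef
  have hcoth : Real.cosh (π * u / 2) / Real.sinh (π * u / 2) = (1 + x) / (1 - x) := by
    rw [Real.cosh_eq, Real.sinh_eq, Real.exp_neg, hxE]
    have hE0 : Real.exp (π * u / 2) ≠ 0 := (Real.exp_pos _).ne'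
    have hlt : (Real.exp (π * u / 2))⁻¹ < 1 := by
      rw [inv_lt_one_iff₀]; right; exact hE1
    have hEsub : Real.exp (π * u / 2) - (Real.exp (π * u / 2))⁻¹ ≠ 0 := by
      nlinarith [Real.exp_pos (π * u / 2)]
    have h1x : 1 - (Real.exp (π * u / 2))⁻¹ ^ 2 ≠ 0 := by
      nlinarith [inv_pos.mpr (Real.exp_pos (π * u / 2))]
    field_simp
  have hpos : 0 < (1 + x) / (1 - x) := by
    apply div_pos <;> linarith
  have hlog : hptDensity u = (2 / π) * (Real.log (1 + x) - Real.log (1 - x)) := by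
    rw [hptDensity, hcoth, abs_of_pos hpos, Real.log_div (by linarith) (by linarith)]
  rw [hlog]
  have hser := (Real.hasSum_log_sub_log_of_abs_lt_one
    (x := x) (by rw [abs_of_pos hx0]; exact hx1)).mul_left (2 / π)
  convert hser using 2 with k
  · rfl
  unfold F
  rw [← Real.exp_nat_mul]
  push_cast
  ring_nf

lemma F_integrableOn (k : ℕ) : IntegrableOn (F k) (Ioi (0:ℝ)) := by
  have hπ := Real.pi_pos
  have hb : (0:ℝ) < (2 * (k:ℝ) + 1) * π := by positivity
  have hFeq : F k = fun x => ((4 / π) * (1 / (2 * (k:ℝ) + 1))) * Real.exp (-((2 * (k:ℝ) + 1) * π) * x) := by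
    funext x; unfold F; ring_nf
  rw [hFeq]
  exact (exp_neg_integrableOn_Ioi 0 hb).const_mul _

lemma F_integral (k : ℕ) :
    ∫ u in Ioi (0:ℝ), F k u = (4 / π ^ 2) * (1 / (2 * (k:ℝ) + 1) ^ 2) := by
  have hπ := Real.pi_pos
  have hb : (0:ℝ) < (2 * (k:ℝ) + 1) * π := by positivity
  unfold F
  rw [integral_const_mul]
  have h2 := integral_comp_mul_left_Ioi (fun y : ℝ => Real.exp (-y)) 0 hb
  simp only [mul_zero, integral_exp_neg_Ioi_zero, smul_eq_mul, mul_one] at h2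
  rw [h2]
  have h2 : 2 * (k:ℝ) + 1 ≠ 0 := by positivity
  field_simp

lemma hasSum_integrals :
    HasSum (fun k : ℕ => (4 / π ^ 2) * (1 / (2 * (k:ℝ) + 1) ^ 2)) (1/2 : ℝ) := by
  have hπ := Real.pi_pos
  have := hasSum_odd_sq.mul_left (4 / π ^ 2)
  convert this using 1
  · rfl
  field_simp
  try ring

lemma hpt_measurable : Measurable hptDensity := by
  unfold hptDensity
  exact (Real.measurable_log.comp
    (((Real.continuous_cosh.comp (by fun_prop)).measurable.div
      (Real.continuous_sinh.comp (by fun_prop)).measurable).abs)).const_mul _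

lemma hpt_nonneg {t : ℝ} (ht : t ≠ 0) : 0 ≤ hptDensity t := by
  have hπ := Real.pi_pos
  have hs : Real.sinh (π * t / 2) ≠ 0 := by
    rw [Real.sinh_ne_zero]
    intro h
    apply ht
    have hne : π ≠ 0 := hπ.ne'
    field_simp at h
    try tauto
    simpa [hne] using h
  apply mul_nonneg (by positivity)
  apply Real.log_nonneg
  rw [abs_div, le_div_iff₀ (abs_pos.mpr hs), one_mul]
  rw [Real.abs_sinh, abs_of_pos (Real.cosh_pos _)]
  calc Real.sinh |π * t / 2| ≤ Real.cosh |π * t / 2| := (Real.sinh_lt_cosh _).le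
    _ = Real.cosh (π * t / 2) := Real.cosh_abs _

lemma F_measurable (k : ℕ) : Measurable (F k) := by
  unfold F
  fun_prop

lemma hpt_neg (t : ℝ) : hptDensity (-t) = hptDensity t := by
  unfold hptDensity
  rw [show π * -t / 2 = -(π * t / 2) by ring, Real.cosh_neg, Real.sinh_neg, div_neg, abs_neg]

lemma hpt_abs (t : ℝ) : hptDensity t = hptDensity |t| := by
  rcases abs_choice t with h | h
  · rw [h]
  · rw [h, hpt_neg]

lemma hpt_integrableOn_Ioi : IntegrableOn hptDensity (Ioi (0:ℝ)) := by
  refine ⟨hpt_measurable.aestronglyMeasurable, ?_⟩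
  have hae : 0 ≤ᵐ[volume.restrict (Ioi (0:ℝ))] hptDensity :=
    (ae_restrict_iff' measurableSet_Ioi).mpr
      (Filter.Eventually.of_forall fun u hu => hpt_nonneg (ne_of_gt hu))
  rw [hasFiniteIntegral_iff_ofReal hae]
  have key : ∫⁻ u in Ioi (0:ℝ), ENNReal.ofReal (hptDensity u)
      = ∑' k, ∫⁻ u in Ioi (0:ℝ), ENNReal.ofReal (F k u) := by
    rw [← MeasureTheory.lintegral_tsum (fun k => ((F_measurable k).ennreal_ofReal).aemeasurable)]
    refine setLIntegral_congr_fun measurableSet_Ioi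
      (fun u hu => ?_)
    rw [← (hpt_hasSum hu).tsum_eq,
      ENNReal.ofReal_tsum_of_nonneg (fun k => F_nonneg k u) (hpt_hasSum hu).summable]
  rw [key]
  have hFae : ∀ k : ℕ, 0 ≤ᵐ[volume.restrict (Ioi (0:ℝ))] F k :=
    fun k => Filter.Eventually.of_forall fun u => F_nonneg k u
  have heach : ∀ k : ℕ, ∫⁻ u in Ioi (0:ℝ), ENNReal.ofReal (F k u)
      = ENNReal.ofReal ((4 / π ^ 2) * (1 / (2 * (k:ℝ) + 1) ^ 2)) := fun k => by
    rw [← MeasureTheory.ofReal_integral_eq_lintegral_ofReal (F_integrableOn k) (hFae k),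
      F_integral k]
  simp_rw [heach]
  rw [← ENNReal.ofReal_tsum_of_nonneg
    (fun k => by have := Real.pi_pos; positivity) hasSum_integrals.summable]
  exact ENNReal.ofReal_lt_top

lemma hpt_integral_Ioi : ∫ u in Ioi (0:ℝ), hptDensity u = 1/2 := by
  have hnorm : ∀ k : ℕ, (∫ u in Ioi (0:ℝ), ‖F k u‖) = (4 / π ^ 2) * (1 / (2 * (k:ℝ) + 1) ^ 2) := by
    intro k
    rw [← F_integral k]
    refine setIntegral_congr_fun measurableSet_Ioi fun u _ => ?_
    exact Real.norm_of_nonneg (F_nonneg k u)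
  have hsum : Summable fun k : ℕ => ∫ u in Ioi (0:ℝ), ‖F k u‖ := by
    simp_rw [hnorm]; exact hasSum_integrals.summable
  have h1 := MeasureTheory.integral_tsum_of_summable_integral_norm
    (fun k => F_integrableOn k) hsum
  have h2 : ∫ u in Ioi (0:ℝ), (∑' k, F k u) = ∫ u in Ioi (0:ℝ), hptDensity u :=
    setIntegral_congr_fun measurableSet_Ioi fun u hu => (hpt_hasSum hu).tsum_eq
  rw [h2] at h1
  rw [← h1]
  have : (fun k : ℕ => ∫ u in Ioi (0:ℝ), F k u)
      = fun k : ℕ => (4 / π ^ 2) * (1 / (2 * (k:ℝ) + 1) ^ 2) := funext fun k => F_integral k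
  rw [this, hasSum_integrals.tsum_eq]

lemma hpt_integrable : Integrable hptDensity := by
  have hIoi := hpt_integrableOn_Ioi
  have hIic : IntegrableOn hptDensity (Iic (0:ℝ)) := by
    rw [show (volume : Measure ℝ) = Measure.map Neg.neg volume from
      (Measure.map_neg_eq_self (volume : Measure ℝ)).symm]
    have m : MeasurableEmbedding fun x : ℝ => -x := (Homeomorph.neg ℝ).measurableEmbedding
    rw [m.integrableOn_map_iff]
    have : (hptDensity ∘ fun x : ℝ => -x) = hptDensity := funext fun t => hpt_neg t
    rw [this, show (fun x : ℝ => -x) ⁻¹' Iic 0 = Ici 0 by simp,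
      integrableOn_Ici_iff_integrableOn_Ioi]
    exact hIoi
  have := hIic.union hIoi
  rwa [Iic_union_Ioi, integrableOn_univ] at this

theorem main :
    (∀ t : ℝ, t ≠ 0 → 0 ≤ hptDensity t) ∧
      Integrable hptDensity ∧
      (∫ t : ℝ, hptDensity t) = 1 := by
  refine ⟨fun t ht => hpt_nonneg ht, hpt_integrable, ?_⟩
  have h1 : (∫ t : ℝ, hptDensity t) = ∫ t : ℝ, hptDensity |t| := by
    congr 1; funext t; exact hpt_abs t
  rw [h1, integral_comp_abs, hpt_integral_Ioi]
  norm_num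

end HptAux

/-- The high-peak-tent density is a probability density: it is nonnegative away from `0`,
integrable on `ℝ`, and integrates to `1`. -/
theorem hptDensity_isProbabilityDensity :
    (∀ t : ℝ, t ≠ 0 → 0 ≤ hptDensity t) ∧
      Integrable hptDensity ∧
      (∫ t : ℝ, hptDensity t) = 1 := HptAux.main
end
end
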